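/- Fix a horizon M ∈ ℕ, a finite nonempty action set A, and Δ ≥ 0. Let v_m : A → ℝ for m = 1,…,M satisfy |v_m(a) − v_m(a')| ≤ Δ for all a, a' ∈ A and all m. Define recursively: R_0(a) = 0; σ_m(a) = max(R_{m−1}(a),0) / ∑_{b∈A} max(R_{m−1}(b),0) if ∑_{b∈A} max(R_{m−1}(b),0) > 0, and σ_m(a) = 1/|A| otherwise; r_m(a) = v_m(a) − ∑_{b∈A} σ_m(b)·v_m(b); and R_m(a) = R_{m−1}(a) + r_m(a). Then max_{a∈A} R_M(a) ≤ Δ·√(|A|·M). -/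
import Mathlib

open Finset

lemma pos_part_sq_step (x y : ℝ) :
    (max (x + y) 0)^2 ≤ (max x 0)^2 + 2 * (max x 0) * y + y^2 := by
  rcases le_or_gt (x + y) 0 with h | h
  · rw [max_eq_right h]
    nlinarith [sq_nonneg (max x 0 + y)]
  · rw [max_eq_left h.le]
    nlinarith [le_max_left x 0, le_max_right x 0, h]

/-- Lemma 2 (no-regret property of regret matching) for a general finite action set: the
maximal cumulative counterfactual regret after `M` rounds is at most `Δ·√(|A|·M)`. -/
theorem tracer_regret_matching_bound
    (M : ℕ) (A : Type*) [Fintype A] [Nonempty A]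
    (Δ : ℝ) (hΔ : 0 ≤ Δ)
    (v σ r R : ℕ → A → ℝ)
    (hv : ∀ m, 1 ≤ m → m ≤ M → ∀ a a', |v m a - v m a'| ≤ Δ)
    (hR0 : ∀ a, R 0 a = 0)
    (hσ : ∀ m, 1 ≤ m → ∀ a, σ m a =
      if 0 < ∑ b, max (R (m - 1) b) 0
      then max (R (m - 1) a) 0 / ∑ b, max (R (m - 1) b) 0
      else 1 / (Fintype.card A : ℝ))
    (hr : ∀ m, 1 ≤ m → ∀ a, r m a = v m a - ∑ b, σ m b * v m b)
    (hRrec : ∀ m, 1 ≤ m → ∀ a, R m a = R (m - 1) a + r m a) :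
    Finset.univ.sup' Finset.univ_nonempty (R M) ≤
      Δ * Real.sqrt ((Fintype.card A : ℝ) * M) := by
  have hcard : (0 : ℝ) < (Fintype.card A : ℝ) := by
    exact_mod_cast Fintype.card_pos
  set n : ℝ := (Fintype.card A : ℝ) with hn
  have key : ∀ m, m ≤ M → ∑ a, (max (R m a) 0)^2 ≤ n * Δ^2 * m := by
    intro m
    induction m with
    | zero => intro _; simp [hR0]
    | succ k ih =>
      intro hk
      have hk' : k ≤ M := Nat.le_of_succ_le hk
      have h1 : 1 ≤ k + 1 := Nat.succ_le_succ (Nat.zero_le k)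
      have hpred : (k + 1) - 1 = k := rfl
      set S : ℝ := ∑ b, max (R k b) 0 with hS
      have hSnn : 0 ≤ S := Finset.sum_nonneg fun b _ => le_max_right _ 0
      have hσval : ∀ a, σ (k+1) a =
          if 0 < S then max (R k a) 0 / S else 1 / n := by
        intro a; simpa [hpred] using hσ (k+1) h1 a
      have hσnn : ∀ a, 0 ≤ σ (k+1) a := by
        intro a; rw [hσval a]
        split
        · positivity
        · positivity
      have hσsum : ∑ b, σ (k+1) b = 1 := by
        rcases lt_or_ge 0 S with hpos | hneg
        · rw [Finset.sum_congr rfl fun b _ => by rw [hσval b, if_pos hpos]]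
          rw [← Finset.sum_div, ← hS, div_self hpos.ne']
        · rw [Finset.sum_congr rfl fun b _ => by
            rw [hσval b, if_neg (not_lt.mpr hneg)]]
          rw [Finset.sum_const, Finset.card_univ, nsmul_eq_mul, ← hn,
            mul_one_div, div_self hcard.ne']
      have hrval : ∀ a, r (k+1) a = ∑ b, σ (k+1) b * (v (k+1) a - v (k+1) b) := by
        intro a
        rw [hr (k+1) h1 a]
        rw [Finset.sum_congr rfl fun b _ => mul_sub (σ (k+1) b) _ _]
        rw [Finset.sum_sub_distrib, ← Finset.sum_mul, hσsum, one_mul]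
      have hrbound : ∀ a, |r (k+1) a| ≤ Δ := by
        intro a
        rw [hrval a]
        calc |∑ b, σ (k+1) b * (v (k+1) a - v (k+1) b)|
            ≤ ∑ b, |σ (k+1) b * (v (k+1) a - v (k+1) b)| :=
              Finset.abs_sum_le_sum_abs _ _
          _ ≤ ∑ b, σ (k+1) b * Δ := by
              refine Finset.sum_le_sum fun b _ => ?_
              rw [abs_mul, abs_of_nonneg (hσnn b)]
              exact mul_le_mul_of_nonneg_left (hv (k+1) h1 hk a b) (hσnn b)
          _ = Δ := by rw [← Finset.sum_mul, hσsum, one_mul]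
      have hinner : ∑ a, max (R k a) 0 * r (k+1) a = 0 := by
        rcases lt_or_ge 0 S with hpos | hneg
        · have : ∀ a, max (R k a) 0 = σ (k+1) a * S := by
            intro a; rw [hσval a, if_pos hpos, div_mul_cancel₀ _ hpos.ne']
          calc ∑ a, max (R k a) 0 * r (k+1) a
              = ∑ a, (S * (σ (k+1) a * v (k+1) a)
                  - (S * σ (k+1) a) * (∑ b, σ (k+1) b * v (k+1) b)) :=
                Finset.sum_congr rfl fun a _ => by
                  rw [this a, hr (k+1) h1 a]; ring
            _ = S * (∑ a, σ (k+1) a * v (k+1) a)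
                  - (S * ∑ a, σ (k+1) a) * (∑ b, σ (k+1) b * v (k+1) b) := by
                rw [Finset.sum_sub_distrib, ← Finset.mul_sum, ← Finset.sum_mul,
                  ← Finset.mul_sum]
            _ = 0 := by rw [hσsum]; ring
        · have hS0 : ∀ a, max (R k a) 0 = 0 := by
            intro a
            have := Finset.sum_eq_zero_iff_of_nonneg
              (fun b (_ : b ∈ Finset.univ) => le_max_right (R k b) 0)
            exact (this.mp (le_antisymm hneg hSnn)) a (Finset.mem_univ a)
          simp [hS0]
      calc ∑ a, (max (R (k+1) a) 0)^2
          = ∑ a, (max (R k a + r (k+1) a) 0)^2 := by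
            refine Finset.sum_congr rfl fun a _ => ?_
            rw [hRrec (k+1) h1 a, hpred]
        _ ≤ ∑ a, ((max (R k a) 0)^2 + 2 * (max (R k a) 0) * r (k+1) a
              + (r (k+1) a)^2) :=
            Finset.sum_le_sum fun a _ => pos_part_sq_step _ _
        _ = (∑ a, (max (R k a) 0)^2) + 2 * (∑ a, max (R k a) 0 * r (k+1) a)
              + ∑ a, (r (k+1) a)^2 := by
            rw [Finset.sum_add_distrib, Finset.sum_add_distrib, Finset.mul_sum]
            congr 2
            exact Finset.sum_congr rfl fun a _ => by ring
        _ ≤ n * Δ^2 * k + 2 * 0 + ∑ _a : A, Δ^2 := by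
            rw [hinner]
            refine add_le_add (add_le_add (ih hk') le_rfl) ?_
            refine Finset.sum_le_sum fun a _ => ?_
            nlinarith [hrbound a, abs_nonneg (r (k+1) a), sq_abs (r (k+1) a)]
        _ = n * Δ^2 * (((k + 1 : ℕ)) : ℝ) := by
            rw [Finset.sum_const, Finset.card_univ, nsmul_eq_mul, ← hn]
            push_cast
            ring
  refine Finset.sup'_le _ _ fun a _ => ?_
  have h1 : R M a ≤ max (R M a) 0 := le_max_left _ _
  have h2 : (max (R M a) 0)^2 ≤ n * Δ^2 * M := by
    refine le_trans ?_ (key M le_rfl)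
    exact Finset.single_le_sum (f := fun a => (max (R M a) 0)^2)
      (fun b _ => sq_nonneg _) (Finset.mem_univ a)
  have h3 : max (R M a) 0 ≤ Real.sqrt (n * Δ^2 * M) := by
    rw [show n * Δ^2 * M = Δ^2 * (n * M) by ring]
    rw [Real.sqrt_mul (sq_nonneg Δ), Real.sqrt_sq hΔ]
    have hnm : (0:ℝ) ≤ n * M := by positivity
    nlinarith [Real.sq_sqrt hnm, Real.sqrt_nonneg (n*M),
      le_max_right (R M a) 0, h2,
      Real.sqrt_nonneg ((n:ℝ)*M), mul_nonneg hΔ (Real.sqrt_nonneg (n*M))]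
  calc R M a ≤ max (R M a) 0 := h1
    _ ≤ Real.sqrt (n * Δ^2 * M) := h3
    _ = Δ * Real.sqrt (n * M) := by
        rw [show n * Δ^2 * M = Δ^2 * (n * M) by ring,
          Real.sqrt_mul (sq_nonneg Δ), Real.sqrt_sq hΔ]
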